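/- Zero entropy in the degenerate binary case. Let u, v ∈ {0,1}^ℕ satisfy u₀ = 0, v₀ = 1, u ≼ σⁿu ≼ v and u ≼ σⁿv ≼ v for all n ≥ 0, and σv ≺ σu. Then h(Σ(u,v)) = 0. -/

import Mathlib

open Filter Set

/-- The shift map on one-sided sequences. -/
def shft (x : ℕ → ℕ) : ℕ → ℕ := fun n => x (n + 1)

/-- Strict lexicographic order on one-sided sequences:
`x ≺ y` iff they differ and `x m < y m` at the first index `m` where they differ. -/
def lexLt (x y : ℕ → ℕ) : Prop := ∃ m, (∀ i, i < m → x i = y i) ∧ x m < y m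

/-- Lexicographic order `x ≼ y` on one-sided sequences. -/
def lexLe (x y : ℕ → ℕ) : Prop := x = y ∨ lexLt x y

/-- The map `φ̄^{α,β} : ℝ → [0,1]`:  `0` for `t ≤ α`, `(t-α)/β` for `α ≤ t ≤ α+β`,
`1` for `t ≥ α+β`. -/
noncomputable def phiB (α β t : ℝ) : ℝ :=
  if t ≤ α then 0 else if α + β ≤ t then 1 else (t - α) / β

/-- `φ̄ₙ^{α,β}(x) = φ̄^{α,β}(x₀ + φ̄^{α,β}(x₁ + ⋯ + φ̄^{α,β}(x_{n-1})⋯))`. -/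
noncomputable def phiBN (α β : ℝ) : ℕ → (ℕ → ℕ) → ℝ
  | 0, _ => 0
  | n + 1, x => phiB α β (x 0 + phiBN α β n (shft x))

/-- `φ̄_∞^{α,β}(x) = limₙ φ̄ₙ^{α,β}(x)`; the sequence `φ̄ₙ^{α,β}(x)` is nondecreasing in `n`
and bounded, so its limit is its supremum. -/
noncomputable def phiBInf (α β : ℝ) (x : ℕ → ℕ) : ℝ := ⨆ n, phiBN α β n x

/-- `T̂_{α,β}(x) = βx + α − ⌊βx + α⌋`. -/
noncomputable def Tlow (α β x : ℝ) : ℝ := β * x + α - ⌊β * x + α⌋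

/-- `Ť_{α,β}(x) = βx + α + 1 − ⌈βx + α⌉`. -/
noncomputable def Thigh (α β x : ℝ) : ℝ := β * x + α + 1 - ⌈β * x + α⌉

/-- `k = ⌈α + β⌉`, the size of the alphabet `A = {0, …, k-1}`. -/
noncomputable def kAB (α β : ℝ) : ℕ := (⌈α + β⌉).toNat

/-- The string `u^{α,β}`, the coding of the orbit of `0`:
`u^{α,β}ₙ = ⌊β T̂ⁿ_{α,β}(0) + α⌋`. -/
noncomputable def uItin (α β : ℝ) : ℕ → ℕ := fun n => (⌊β * (Tlow α β)^[n] 0 + α⌋).toNat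

/-- The string `v^{α,β}`, the coding of the orbit of `1`:
`v^{α,β}ₙ = ⌈β Ťⁿ_{α,β}(1) + α⌉ − 1`. -/
noncomputable def vItin (α β : ℝ) : ℕ → ℕ := fun n => (⌈β * (Thigh α β)^[n] 1 + α⌉ - 1).toNat

/-- The shift space `Σ(u,v) = {x ∈ A^ℕ : u ≼ σⁿx ≼ v for all n ≥ 0}`, `A = {0,…,k-1}`. -/
def SigSet (k : ℕ) (u v : ℕ → ℕ) : Set (ℕ → ℕ) :=
  {x | (∀ i, x i < k) ∧ ∀ n, lexLe u (shft^[n] x) ∧ lexLe (shft^[n] x) v}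

/-- The number of words of length `n` in the language of `Σ(u,v)` (prefixes of elements). -/
noncomputable def nWords (k : ℕ) (u v : ℕ → ℕ) (n : ℕ) : ℕ :=
  Nat.card {w : Fin n → ℕ // ∃ x ∈ SigSet k u v, ∀ i : Fin n, x i.1 = w i}

/-- The topological entropy (base 2) of `Σ(u,v)`:
`h = limₙ (1/n) log₂ card(Lₙ)` (the limit exists by subadditivity, so it equals the limsup;
it is `0` when `Σ(u,v) = ∅`). -/
noncomputable def entS (k : ℕ) (u v : ℕ → ℕ) : ℝ :=
  Filter.limsup (fun n : ℕ => Real.logb 2 (nWords k u v n) / (n : ℝ)) Filter.atTop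

/-- Concatenation of the word `w₀ ⋯ w_{p-1}` (the first `p` letters of `w`) with the
string `y`. -/
def wcat (p : ℕ) (w y : ℕ → ℕ) : ℕ → ℕ := fun n => if n < p then w n else y (n - p)

lemma shft_iter (k : ℕ) (x : ℕ → ℕ) (i : ℕ) : shft^[k] x i = x (i + k) := by
  induction k generalizing x i with
  | zero => rfl
  | succ k ih =>
    rw [Function.iterate_succ_apply, ih]
    simp [shft]; ring_nf

lemma lexLt_trans {a b c : ℕ → ℕ} (h1 : lexLt a b) (h2 : lexLt b c) : lexLt a c := by
  obtain ⟨j1, h1a, h1b⟩ := h1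
  obtain ⟨j2, h2a, h2b⟩ := h2
  refine ⟨min j1 j2, fun i hi => ?_, ?_⟩
  · rw [h1a i (lt_of_lt_of_le hi (min_le_left _ _)),
      h2a i (lt_of_lt_of_le hi (min_le_right _ _))]
  · rcases lt_trichotomy j1 j2 with h | h | h
    · rw [min_eq_left h.le]; exact lt_of_lt_of_le h1b (le_of_eq (h2a j1 h))
    · subst h; rw [min_self]; exact h1b.trans h2b
    · rw [min_eq_right h.le]; rw [h1a j2 h]; exact h2b

lemma lexLt_irrefl {a : ℕ → ℕ} (h : lexLt a a) : False := by
  obtain ⟨j, _, hj⟩ := h; exact lt_irrefl _ hj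

lemma lexLe_trans {a b c : ℕ → ℕ} (h1 : lexLe a b) (h2 : lexLe b c) : lexLe a c := by
  rcases h1 with rfl | h1
  · exact h2
  rcases h2 with rfl | h2
  · exact Or.inr h1
  exact Or.inr (lexLt_trans h1 h2)

lemma lexLe_lexLt_false {a b : ℕ → ℕ} (h1 : lexLe a b) (h2 : lexLt b a) : False := by
  rcases h1 with rfl | h1
  · exact lexLt_irrefl h2
  exact lexLt_irrefl (lexLt_trans h1 h2)

lemma lexLe_shft {a b : ℕ → ℕ} (h : lexLe a b) (h0 : a 0 = b 0) :
    lexLe (shft a) (shft b) := by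
  rcases h with rfl | ⟨j, hj, hj'⟩
  · exact Or.inl rfl
  match j, hj, hj' with
  | 0, hj, hj' => exact absurd h0 (ne_of_lt hj')
  | (j+1), hj, hj' =>
    exact Or.inr ⟨j, fun i hi => hj (i+1) (by omega), hj'⟩

/-- Extend the first `M` letters of `y` by zeros. -/
def ext0 (M : ℕ) (y : ℕ → ℕ) : ℕ → ℕ := wcat M y (fun _ => 0)

lemma ext0_congr {M : ℕ} {y y' : ℕ → ℕ} (h : ∀ t, t < M → y t = y' t) :
    ext0 M y = ext0 M y' := by
  funext n
  simp only [ext0, wcat]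
  split
  · exact h n ‹_›
  · rfl

/-- If `σu ≼ y`, then comparing zero-extended windows of length `M`, `ext0 M σu ≼ ext0 M y`. -/
lemma ext0_le_of_le {M : ℕ} {a y : ℕ → ℕ} (h : lexLe a y) :
    lexLe (ext0 M a) (ext0 M y) := by
  rcases h with rfl | ⟨j, hj, hj'⟩
  · exact Or.inl rfl
  by_cases hjM : j < M
  · refine Or.inr ⟨j, fun i hi => ?_, ?_⟩
    · simp only [ext0, wcat]
      split
      · exact hj i hi
      · rfl
    · simp only [ext0, wcat, if_pos hjM]; exact hj'
  · refine Or.inl (ext0_congr fun t ht => hj t (by omega))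

/-- Decision function: look at a window and decide whether the previous letter was 0 or 1. -/
noncomputable def Fdec (M : ℕ) (u y : ℕ → ℕ) : ℕ :=
  open Classical in
  if lexLe (ext0 M (shft u)) (ext0 M y) then 0 else 1

lemma Fdec_congr {M : ℕ} (u : ℕ → ℕ) {y y' : ℕ → ℕ} (h : ∀ t, t < M → y t = y' t) :
    Fdec M u y = Fdec M u y' := by
  unfold Fdec
  rw [ext0_congr h]

/-- Key determination lemma: each letter of `x ∈ Σ(u,v)` is determined by the next
`m+1` letters. -/
lemma determine (u v x : ℕ → ℕ) (m : ℕ)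
    (hagree : ∀ i, i < m → shft v i = shft u i) (hdiff : shft v m < shft u m)
    (hx2 : ∀ i, x i < 2)
    (hxc : ∀ n, lexLe u (shft^[n] x) ∧ lexLe (shft^[n] x) v)
    (hu0 : u 0 = 0) (hv0 : v 0 = 1)
    (n : ℕ) : x n = Fdec (m+1) u (shft^[n+1] x) := by
  set M := m + 1 with hM
  have hz0 : (shft^[n] x) 0 = x n := by rw [shft_iter]; ring_nf
  have hsucc : shft (shft^[n] x) = shft^[n+1] x := (Function.iterate_succ_apply' shft n x).symm
  -- lexLt (ext0 M (shft v)) (ext0 M (shft u))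
  have hVU : lexLt (ext0 M (shft v)) (ext0 M (shft u)) := by
    refine ⟨m, fun i hi => ?_, ?_⟩
    · simp only [ext0, wcat]
      split
      · exact hagree i hi
      · rfl
    · simp only [ext0, wcat, if_pos (by omega : m < M)]
      exact hdiff
  rcases (by have := hx2 n; omega : x n = 0 ∨ x n = 1) with h0 | h1
  · -- x n = 0 : tail ≥ σu
    have h1 : lexLe u (shft^[n] x) := (hxc n).1
    have h0' : u 0 = (shft^[n] x) 0 := by rw [hz0, h0, hu0]
    have h2 : lexLe (shft u) (shft^[n+1] x) := by
      rw [← hsucc]; exact lexLe_shft h1 h0'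
    have h3 : lexLe (ext0 M (shft u)) (ext0 M (shft^[n+1] x)) := ext0_le_of_le h2
    rw [h0]
    unfold Fdec
    rw [if_pos h3]
  · -- x n = 1 : tail ≤ σv
    have h2 : lexLe (shft^[n] x) v := (hxc n).2
    have h0' : (shft^[n] x) 0 = v 0 := by rw [hz0, h1, hv0]
    have h3 : lexLe (shft^[n+1] x) (shft v) := by
      rw [← hsucc]; exact lexLe_shft h2 h0'
    have h4 : lexLe (ext0 M (shft^[n+1] x)) (ext0 M (shft v)) := ext0_le_of_le h3
    rw [h1]
    unfold Fdec
    rw [if_neg]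
    intro h5
    exact lexLe_lexLt_false (lexLe_trans h5 h4) hVU

lemma words_finite (u v : ℕ → ℕ) (n : ℕ) :
    Finite {w : Fin n → ℕ // ∃ x ∈ SigSet 2 u v, ∀ i : Fin n, x i.1 = w i} := by
  have hf : Function.Injective
      (fun (w : {w : Fin n → ℕ // ∃ x ∈ SigSet 2 u v, ∀ i : Fin n, x i.1 = w i}) =>
        (fun i => (⟨min (w.1 i) 1, by omega⟩ : Fin 2) : Fin n → Fin 2)) := by
    intro w w' h
    apply Subtype.ext; funext i
    obtain ⟨x, hx, hxw⟩ := w.2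
    obtain ⟨x', hx', hxw'⟩ := w'.2
    have h1 : w.1 i < 2 := by rw [← hxw i]; exact hx.1 i
    have h2 : w'.1 i < 2 := by rw [← hxw' i]; exact hx'.1 i
    have h3 := congrFun h i
    simp only [Fin.mk.injEq] at h3
    omega
  exact Finite.of_injective _ hf

lemma nWords_pos (u v : ℕ → ℕ) (hu : ∀ i, u i < 2)
    (huc : ∀ n, lexLe u (shft^[n] u) ∧ lexLe (shft^[n] u) v) (n : ℕ) :
    1 ≤ nWords 2 u v n := by
  haveI := words_finite u v n
  haveI : Nonempty {w : Fin n → ℕ // ∃ x ∈ SigSet 2 u v, ∀ i : Fin n, x i.1 = w i} :=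
    ⟨⟨fun i => u i.1, u, ⟨hu, huc⟩, fun _ => rfl⟩⟩
  exact Nat.card_pos

lemma nWords_le (u v : ℕ → ℕ) (m : ℕ)
    (hagree : ∀ i, i < m → shft v i = shft u i) (hdiff : shft v m < shft u m)
    (hu0 : u 0 = 0) (hv0 : v 0 = 1)
    (n : ℕ) (hn : m + 1 ≤ n) :
    nWords 2 u v n ≤ 2 ^ (m + 1) := by
  set M := m + 1 with hMdef
  set S := {w : Fin n → ℕ // ∃ x ∈ SigSet 2 u v, ∀ i : Fin n, x i.1 = w i} with hS
  have hg : ∃ g : S → (Fin M → Fin 2), Function.Injective g := by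
    refine ⟨fun w => fun j => ⟨min (w.1 ⟨n - M + j.1, by have := j.2; omega⟩) 1, by omega⟩, ?_⟩
    intro w w' h
    obtain ⟨x, hx, hxw⟩ := w.2
    obtain ⟨x', hx', hxw'⟩ := w'.2
    have hlt : ∀ i : Fin n, w.1 i < 2 := fun i => by rw [← hxw i]; exact hx.1 i
    have hlt' : ∀ i : Fin n, w'.1 i < 2 := fun i => by rw [← hxw' i]; exact hx'.1 i
    have hwin : ∀ j : Fin n, n - M ≤ j.1 → w.1 j = w'.1 j := by
      intro j hj
      have hc := congrFun h ⟨j.1 - (n - M), by have := j.2; omega⟩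
      simp only [Fin.mk.injEq] at hc
      have e : (⟨n - M + (j.1 - (n - M)), by have := j.2; omega⟩ : Fin n) = j := by
        apply Fin.ext; simp; omega
      rw [e] at hc
      have := hlt j; have := hlt' j
      omega
    have key : ∀ d, ∀ i, ∀ hi : i < n, n - i ≤ d → w.1 ⟨i, hi⟩ = w'.1 ⟨i, hi⟩ := by
      intro d
      induction d with
      | zero => intro i hi hle; omega
      | succ d ih =>
        intro i hi hle
        by_cases hcase : n - M ≤ i
        · exact hwin ⟨i, hi⟩ hcase
        · push_neg at hcase
          have hd1 : x i = Fdec M u (shft^[i+1] x) :=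
            determine u v x m hagree hdiff hx.1 hx.2 hu0 hv0 i
          have hd2 : x' i = Fdec M u (shft^[i+1] x') :=
            determine u v x' m hagree hdiff hx'.1 hx'.2 hu0 hv0 i
          have hcongr : Fdec M u (shft^[i+1] x) = Fdec M u (shft^[i+1] x') := by
            apply Fdec_congr
            intro t ht
            rw [shft_iter, shft_iter]
            have hb : t + (i + 1) < n := by omega
            have e1 : x (t + (i + 1)) = w.1 ⟨t + (i + 1), hb⟩ := hxw ⟨t + (i+1), hb⟩
            have e2 : x' (t + (i + 1)) = w'.1 ⟨t + (i + 1), hb⟩ := hxw' ⟨t + (i+1), hb⟩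
            rw [e1, e2]
            exact ih (t + (i + 1)) hb (by omega)
          rw [← hxw ⟨i, hi⟩, ← hxw' ⟨i, hi⟩, hd1, hd2, hcongr]
    apply Subtype.ext; funext i
    have := key n i.1 i.2 (by omega)
    simpa using this
  obtain ⟨g, hginj⟩ := hg
  have hcard : Nat.card S ≤ Nat.card (Fin M → Fin 2) :=
    Nat.card_le_card_of_injective g hginj
  have h' : Nat.card S ≤ 2 ^ M := by simpa [Nat.card_eq_fintype_card] using hcard
  exact h'

/-- **Zero entropy in the degenerate binary case.** Let `u, v ∈ {0,1}^ℕ` satisfy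
`u₀ = 0`, `v₀ = 1`, `u ≼ σⁿu ≼ v` and `u ≼ σⁿv ≼ v` for all `n ≥ 0`, and `σv ≺ σu`.
Then `h(Σ(u,v)) = 0`. -/
theorem zero_entropy_degenerate_binary (u v : ℕ → ℕ)
    (hu : ∀ i, u i < 2) (hv : ∀ i, v i < 2)
    (hu0 : u 0 = 0) (hv0 : v 0 = 1)
    (hcond : ∀ n, lexLe u (shft^[n] u) ∧ lexLe (shft^[n] u) v ∧
                  lexLe u (shft^[n] v) ∧ lexLe (shft^[n] v) v)
    (hlt : lexLt (shft v) (shft u)) :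
    entS 2 u v = 0 := by
  obtain ⟨m, hagree, hdiff⟩ := hlt
  set M := m + 1 with hMdef
  have hp : ∀ n, 1 ≤ nWords 2 u v n :=
    nWords_pos u v hu (fun n => ⟨(hcond n).1, (hcond n).2.1⟩)
  have hb : ∀ n, M ≤ n → nWords 2 u v n ≤ 2 ^ M :=
    fun n hn => nWords_le u v m hagree hdiff hu0 hv0 n hn
  have htend : Tendsto (fun n : ℕ => Real.logb 2 (nWords 2 u v n) / (n : ℝ))
      atTop (nhds 0) := by
    apply tendsto_of_tendsto_of_tendsto_of_le_of_le' tendsto_const_nhds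
      (tendsto_const_div_atTop_nhds_zero_nat (M : ℝ))
    · filter_upwards [eventually_ge_atTop 1] with n hn
      apply div_nonneg _ (Nat.cast_nonneg n)
      apply Real.logb_nonneg (by norm_num)
      exact_mod_cast hp n
    · filter_upwards [eventually_ge_atTop (max M 1)] with n hn
      have hn1 : 1 ≤ n := le_trans (le_max_right _ _) hn
      have hnM : M ≤ n := le_trans (le_max_left _ _) hn
      have h1 : Real.logb 2 (nWords 2 u v n) ≤ (M : ℝ) := by
        have h2 : (nWords 2 u v n : ℝ) ≤ (2 : ℝ) ^ M := by
          exact_mod_cast hb n hnM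
        calc Real.logb 2 (nWords 2 u v n) ≤ Real.logb 2 ((2:ℝ) ^ M) := by
              have hpos : (0:ℝ) < (nWords 2 u v n : ℝ) := by exact_mod_cast hp n
              exact Real.logb_le_logb_of_le (by norm_num : (1:ℝ) < 2) hpos h2
          _ = (M : ℝ) := by
              rw [Real.logb_pow, Real.logb_self_eq_one (by norm_num : (1:ℝ) < 2)]; ring
      have hnpos : (0:ℝ) < n := by exact_mod_cast hn1
      exact div_le_div_of_nonneg_right h1 hnpos.le
  exact htend.limsup_eq
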